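/- The following are equivalent: (a) S_{p-1} \not\equiv 0 \pmod{p} for every prime p \ge 3; (b) S_{n-1} \not\equiv 0 \pmod{n} for every integer n \ge 3. -/
import Mathlib

lemma derangements_key (d : ℕ) (hd : 1 ≤ d) :
    ∀ k : ℕ, ∀ m : ℕ, 1 ≤ m →
      ((numDerangements (m * d + k) : ZMod d)) =
        (-1) ^ (m * d) * (numDerangements k : ZMod d) := by
  intro k
  induction k with
  | zero =>
    intro m hm
    obtain ⟨j, hj⟩ : ∃ j, m * d = j + 1 :=
      ⟨m * d - 1, (Nat.succ_pred_eq_of_pos (by positivity)).symm⟩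
    have hrec := numDerangements_succ j
    have hcast : ((numDerangements (j + 1) : ℤ) : ZMod d) =
        (((j : ℤ) + 1) * (numDerangements j : ℤ) - (-1 : ℤ) ^ j : ℤ) := by
      exact_mod_cast congrArg (Int.cast : ℤ → ZMod d) hrec
    have hzero : ((j : ZMod d) + 1) = 0 := by
      have : ((m * d : ℕ) : ZMod d) = 0 := by
        rw [ZMod.natCast_eq_zero_iff]
        exact Dvd.intro_left m rfl
      rw [hj] at this
      push_cast at this
      exact this
    rw [Nat.add_zero, hj]
    push_cast at hcast
    rw [hcast, hzero, zero_mul, zero_sub, numDerangements_zero]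
    rw [← hj]
    push_cast
    have : (-1 : ZMod d) ^ (m * d) = (-1) ^ (j + 1) := by rw [hj]
    rw [this, pow_succ]
    ring
  | succ k ih =>
    intro m hm
    have hrec := numDerangements_succ (m * d + k)
    have hcast : ((numDerangements (m * d + k + 1) : ℕ) : ZMod d) =
        ((m * d + k : ℕ) + 1) * (numDerangements (m * d + k) : ZMod d)
          - (-1) ^ (m * d + k) := by
      have := congrArg (Int.cast : ℤ → ZMod d) hrec
      push_cast at this ⊢
      exact this
    have hmd : ((m * d : ℕ) : ZMod d) = 0 := by
      rw [ZMod.natCast_eq_zero_iff]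
      exact Dvd.intro_left m rfl
    have hrec2 := numDerangements_succ k
    have hcast2 : ((numDerangements (k + 1) : ℕ) : ZMod d) =
        ((k : ZMod d) + 1) * (numDerangements k : ZMod d) - (-1) ^ k := by
      have := congrArg (Int.cast : ℤ → ZMod d) hrec2
      push_cast at this ⊢
      exact this
    have : (m * d + (k + 1)) = (m * d + k) + 1 := by ring
    rw [this, hcast, ih m hm, hcast2]
    push_cast [hmd]
    rw [pow_add]
    ring

lemma derangements_transfer {n d : ℕ} (hdvd : d ∣ n) (h1 : 1 < d) (h2 : d < n)
    (h : n ∣ numDerangements (n - 1)) : d ∣ numDerangements (d - 1) := by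
  obtain ⟨q, hq⟩ := hdvd
  have hq2 : 2 ≤ q := by
    rcases Nat.lt_or_ge q 2 with h' | h'
    · interval_cases q <;> omega
    · exact h'
  have hkey := derangements_key d (by omega) (d - 1) (q - 1) (by omega)
  have harith : (q - 1) * d + (d - 1) = n - 1 := by
    have : n = d * q := hq
    subst this
    cases q with
    | zero => omega
    | succ q' =>
      rw [Nat.succ_sub_one]
      have : d * (q' + 1) = q' * d + d := by ring
      omega
  rw [harith] at hkey
  have hzero : ((numDerangements (n - 1) : ℕ) : ZMod d) = 0 := by
    rw [ZMod.natCast_eq_zero_iff]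
    exact dvd_trans ⟨q, hq⟩ h
  rw [hzero] at hkey
  have hunit : IsUnit ((-1 : ZMod d) ^ ((q - 1) * d)) := (isUnit_one.neg).pow _
  have : ((numDerangements (d - 1) : ℕ) : ZMod d) = 0 := by
    rcases hunit.exists_left_inv with ⟨u, hu⟩
    have := congrArg (fun x => u * x) hkey.symm
    simpa [← mul_assoc, hu] using this
  rwa [ZMod.natCast_eq_zero_iff] at this

/-- `S_{p-1} ≢ 0 (mod p)` for every prime `p ≥ 3` iff
`S_{n-1} ≢ 0 (mod n)` for every integer `n ≥ 3`. -/
theorem derangement_prime_iff_all :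
    (∀ p : ℕ, p.Prime → 3 ≤ p → ¬ p ∣ numDerangements (p - 1)) ↔
      (∀ n : ℕ, 3 ≤ n → ¬ n ∣ numDerangements (n - 1)) := by
  constructor
  · intro h n hn hdvd
    by_cases hp : n.Prime
    · exact h n hp hn hdvd
    · -- n is composite
      by_cases hodd : ∃ q : ℕ, q.Prime ∧ q ∣ n ∧ q ≠ 2
      · obtain ⟨q, hqp, hqdvd, hq2⟩ := hodd
        have hq3 : 3 ≤ q := by
          have := hqp.two_le
          omega
        have hqn : q < n := by
          have hle := Nat.le_of_dvd (by omega) hqdvd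
          rcases lt_or_eq_of_le hle with h' | h'
          · exact h'
          · exact absurd (h' ▸ hqp) hp
        exact h q hqp hq3 (derangements_transfer hqdvd (by omega) hqn hdvd)
      · -- all prime factors are 2, so n is a power of 2, n ≥ 4
        push_neg at hodd
        have hpow : n = 2 ^ n.primeFactorsList.length :=
          Nat.eq_prime_pow_of_unique_prime_dvd (by omega)
            (fun {q} hq hqd => by
              by_contra h2
              exact h2 (hodd q hq hqd))
        have h4 : 4 ∣ n := by
          rw [hpow]
          have : 2 ≤ n.primeFactorsList.length := by
            by_contra hlen
            push_neg at hlen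
            interval_cases h : n.primeFactorsList.length <;> simp_all
          calc (4 : ℕ) = 2 ^ 2 := rfl
          _ ∣ 2 ^ n.primeFactorsList.length := pow_dvd_pow 2 this
        rcases Nat.lt_or_ge 4 n with h4n | h4n
        · have := derangements_transfer h4 (by omega) h4n hdvd
          revert this
          decide
        · have hn4 : n = 4 := by
            have := Nat.le_of_dvd (by omega) h4
            omega
          subst hn4
          revert hdvd
          decide
  · intro h p hp h3 hdvd
    exact h p h3 hdvd
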